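/- Let C be a preorder category with finite products, B a preorder category, and F : C → B a product-preserving monotone functor. If F is (essentially) surjective on objects and for all d, e ∈ C with F(d) ≤ F(e) there exists e' ≤ d in C with F(e') = F(d) and e' ≤ e, then the induced monotone map from the poset reflection of C localized at {φ : F(φ) iso} to the poset reflection of B is an order isomorphism. -/
import Mathlib

/-- 0-truncated version of the homotopical presentation criterion for preorders:
`C` is a preorder with finite products (binary meets), `B` a preorder, and `F` a
monotone, meet-preserving map that is surjective on objects and has the lifting
property.  Localizing `C` at the morphisms sent to isomorphisms by `F` means taking
the reflexive-transitive closure of `≤` together with the reversed inequalities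
`d ⟶ e'` for `e' ≤ d` with `F e' = F d`; the conclusion that the induced map on
poset reflections is an order isomorphism amounts to: `F` is surjective on objects
and the localized relation between `d` and `e` holds iff `F d ≤ F e`. -/
theorem stmt_17 {C B : Type*} [SemilatticeInf C] [SemilatticeInf B]
    (F : C → B) (hmono : Monotone F) (hinf : ∀ x y : C, F (x ⊓ y) = F x ⊓ F y)
    (hsurj : Function.Surjective F)
    (hlift : ∀ d e : C, F d ≤ F e → ∃ e' : C, e' ≤ d ∧ F e' = F d ∧ e' ≤ e) :
    (∀ b : B, ∃ d : C, F d = b) ∧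
      ∀ d e : C,
        Relation.ReflTransGen (fun x y : C => x ≤ y ∨ (y ≤ x ∧ F x = F y)) d e ↔
          F d ≤ F e := by
  refine ⟨hsurj, fun d e => ⟨fun h => ?_, fun h => ?_⟩⟩
  · induction h with
    | refl => exact le_refl _
    | tail _ hstep ih =>
        rcases hstep with h' | ⟨_, heq⟩
        · exact ih.trans (hmono h')
        · exact ih.trans heq.le
  · obtain ⟨e', he'd, hFe', he'e⟩ := hlift d e h
    exact Relation.ReflTransGen.head (Or.inr ⟨he'd, hFe'.symm⟩)
      (Relation.ReflTransGen.single (Or.inl he'e))
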